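/- arXiv:1108.1056 — 5 statements merged into one kernel-verified Lean document; each statement's English description precedes it below -/
import Mathlib

section
/- Let M be a free, finitely generated ℤ-module and G a finite group acting on M by module automorphisms. Then there exists a G-invariant submodule M' ⊆ M such that M' ∩ M^G = {0} and rank M' + rank M^G = rank M, where M^G denotes the submodule of G-fixed elements. -/
/-- Let `M` be a free, finitely generated `ℤ`-module and `G` a finite group acting on `M`
by `ℤ`-module automorphisms.  Then there is a `G`-invariant submodule `M' ⊆ M` such that
`M' ∩ M^G = {0}` and `rank M' + rank M^G = rank M`, where `M^G` is the submodule of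
`G`-fixed elements. -/
theorem fixed_submodule_complement
    (M : Type*) [AddCommGroup M] [Module ℤ M] [Module.Free ℤ M] [Module.Finite ℤ M]
    (G : Type*) [Group G] [Finite G] [DistribMulAction G M] [SMulCommClass G ℤ M]
    (F : Submodule ℤ M) (hF : (F : Set M) = {m : M | ∀ g : G, g • m = m}) :
    ∃ M' : Submodule ℤ M,
      (∀ (g : G), ∀ m ∈ M', g • m ∈ M') ∧
      M' ⊓ F = ⊥ ∧
      Module.finrank ℤ M' + Module.finrank ℤ F = Module.finrank ℤ M := by
  rename_i iAG iM iFree iFin iG iFinG iDMA iSMC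
  haveI : Subsingleton (Module ℤ M) := (AddCommGroup.uniqueIntModule (M := M)).instSubsingleton
  have hiM : iM = AddCommGroup.toIntModule M := Subsingleton.elim _ _
  subst hiM
  cases nonempty_fintype G
  -- the norm map
  let T : M →ₗ[ℤ] M :=
    { toFun := fun m => ∑ g : G, g • m
      map_add' := fun x y => by simp [smul_add, Finset.sum_add_distrib]
      map_smul' := fun c x => by
        simp only [RingHom.id_apply, Finset.smul_sum]
        exact Finset.sum_congr rfl fun g _ => smul_comm g c x }
  have hTapp : ∀ m : M, T m = ∑ g : G, g • m := fun m => rfl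
  have hmemF : ∀ m : M, m ∈ F ↔ ∀ g : G, g • m = m := by
    intro m
    constructor
    · intro h g; have : m ∈ (F : Set M) := h; rw [hF] at this; exact this g
    · intro h; show m ∈ (F : Set M); rw [hF]; exact h
  have hTF : ∀ m ∈ F, T m = (Fintype.card G : ℤ) • m := by
    intro m hm
    rw [hTapp, Finset.sum_congr rfl (fun g _ => (hmemF m).1 hm g)]
    simp
  have hTginv : ∀ (g : G) (m : M), T (g • m) = T m := by
    intro g m
    rw [hTapp, hTapp]
    exact Fintype.sum_equiv (Equiv.mulRight g) (fun h => h • g • m) (fun h => h • m)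
      (fun h => by simp [← mul_smul])
  have hcard : (Fintype.card G : ℤ) ≠ 0 := by exact_mod_cast Fintype.card_ne_zero
  refine ⟨LinearMap.ker T, ?_, ?_, ?_⟩
  · intro g m hm
    simp only [LinearMap.mem_ker] at hm ⊢
    rw [hTginv g m, hm]
  · apply le_antisymm _ bot_le
    intro m hm
    obtain ⟨hm1, hm2⟩ := Submodule.mem_inf.1 hm
    have h0 : T m = 0 := hm1
    rw [hTF m hm2] at h0
    have hm0 : m = 0 := (smul_eq_zero.mp h0).resolve_left hcard
    simp [hm0]
  · -- range T ⊆ F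
    have hrange : LinearMap.range T ≤ F := by
      rintro _ ⟨m, rfl⟩
      rw [hmemF]
      intro g
      rw [hTapp, Finset.smul_sum]
      exact Fintype.sum_equiv (Equiv.mulLeft g) (fun h => g • h • m) (fun h => h • m)
        (fun h => by simp [← mul_smul])
    have hle1 := Submodule.rank_mono hrange
    have hle2 := LinearMap.rank_le_of_injective
      (LinearMap.codRestrict (LinearMap.range T) (T.comp F.subtype)
        (fun x => LinearMap.mem_range_self T x.1))
      (by
        intro x y hxy
        have h1 : T x.1 = T y.1 := congrArg Subtype.val hxy
        rw [hTF x.1 x.2, hTF y.1 y.2] at h1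
        exact Subtype.ext (smul_right_injective M hcard h1))
    have hrankeq := le_antisymm hle1 hle2
    have hrn := T.rank_range_add_rank_ker
    rw [hrankeq] at hrn
    have h1 : Module.rank ℤ F < Cardinal.aleph0 :=
      lt_of_le_of_lt (Submodule.rank_le F) (Module.rank_lt_aleph0 ℤ M)
    have h2 : Module.rank ℤ (LinearMap.ker T) < Cardinal.aleph0 :=
      lt_of_le_of_lt (Submodule.rank_le _) (Module.rank_lt_aleph0 ℤ M)
    have h3 := congrArg Cardinal.toNat hrn
    rw [Cardinal.toNat_add h1 h2] at h3
    simp only [Module.finrank]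
    rw [add_comm]
    exact h3
end

section
/- Let G be a finite group acting by continuous group automorphisms on a torus T (a compact connected abelian Lie group). Then there exist subtori T₁, T₂ of T such that: (1) T₁ is contained in the fixed-point subgroup T^G, (2) the fixed-point subgroup T₂^G is finite, and (3) T₁ and T₂ together generate T. -/
lemma torsion_finite (k : ℕ) (hk : 0 < k) :
    {x : AddCircle (1 : ℝ) | k • x = 0}.Finite := by
  haveI : Fact ((0:ℝ) < 1) := ⟨one_pos⟩
  apply Set.Finite.subset
    (Set.Finite.biUnion (Nat.divisors k).finite_toSet
      (fun d hd => AddCircle.finite_setOfPred_addOrderOf_eq (1:ℝ) (Nat.pos_of_mem_divisors hd)))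
  intro x hx
  refine Set.mem_biUnion ?_ rfl
  exact Nat.mem_divisors.mpr ⟨addOrderOf_dvd_of_nsmul_eq_zero hx, hk.ne'⟩

/-- Let `G` be a finite group acting by continuous group automorphisms on a torus
`T = (ℝ/ℤ)^n`.  Then there are subtori `T₁, T₂` of `T` (closed connected subgroups) such
that `T₁` lies in the fixed-point subgroup `T^G`, the fixed-point set of `G` in `T₂` is
finite, and `T₁` and `T₂` together generate `T`. -/
theorem exists_subtori_of_finite_group_action
    (n : ℕ) (G : Type*) [Group G] [Finite G]
    (φ : G →* Multiplicative (AddAut (Fin n → AddCircle (1 : ℝ))))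
    (hcont : ∀ g : G, Continuous ⇑(Multiplicative.toAdd (φ g))) :
    ∃ T₁ T₂ : AddSubgroup (Fin n → AddCircle (1 : ℝ)),
      IsClosed (T₁ : Set (Fin n → AddCircle (1 : ℝ))) ∧
      IsConnected (T₁ : Set (Fin n → AddCircle (1 : ℝ))) ∧
      IsClosed (T₂ : Set (Fin n → AddCircle (1 : ℝ))) ∧
      IsConnected (T₂ : Set (Fin n → AddCircle (1 : ℝ))) ∧
      (∀ t ∈ T₁, ∀ g : G, Multiplicative.toAdd (φ g) t = t) ∧
      ({t : Fin n → AddCircle (1 : ℝ) | t ∈ T₂ ∧ ∀ g : G, Multiplicative.toAdd (φ g) t = t}.Finite) ∧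
      T₁ ⊔ T₂ = ⊤ := by
  haveI : Fact ((0:ℝ) < 1) := ⟨one_pos⟩
  haveI := Fintype.ofFinite G
  set T := Fin n → AddCircle (1 : ℝ) with hT
  set k := Fintype.card G with hk_def
  have hk : 0 < k := Fintype.card_pos
  -- the averaging endomorphism
  set N : T →+ T := ∑ g : G, (Multiplicative.toAdd (φ g)).toAddMonoidHom with hN
  have hNapp : ∀ t : T, N t = ∑ g : G, Multiplicative.toAdd (φ g) t := by
    intro t
    simp [hN, AddMonoidHom.finset_sum_apply]
  have hNc : Continuous N := by
    have : ⇑N = fun t => ∑ g : G, Multiplicative.toAdd (φ g) t := funext hNapp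
    rw [this]
    exact continuous_finset_sum _ fun g _ => hcont g
  -- values of N are fixed points
  have hfix : ∀ (t : T) (g : G), Multiplicative.toAdd (φ g) (N t) = N t := by
    intro t g
    rw [hNapp]
    rw [map_sum]
    refine Fintype.sum_equiv (Equiv.mulLeft g) _ _ fun h => ?_
    simp only [Equiv.coe_mulLeft, map_mul, toAdd_mul, AddAut.add_apply]
  -- on fixed points N is multiplication by k
  have hNfix : ∀ t : T, (∀ g : G, Multiplicative.toAdd (φ g) t = t) → N t = k • t := by
    intro t ht
    rw [hNapp]
    simp [ht, hk_def, Finset.sum_const, Finset.card_univ]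
  set M : T →+ T := k • (AddMonoidHom.id T) - N with hM
  have hMapp : ∀ t : T, M t = k • t - N t := fun t => rfl
  have hMc : Continuous M := by
    have : ⇑M = fun t => k • t - N t := funext hMapp
    rw [this]
    exact (continuous_id.nsmul k).sub hNc
  refine ⟨N.range, M.range, ?_, ?_, ?_, ?_, ?_, ?_, ?_⟩
  · exact (isCompact_range hNc).isClosed
  · exact isConnected_range hNc
  · exact (isCompact_range hMc).isClosed
  · exact isConnected_range hMc
  · rintro t ⟨s, rfl⟩ g
    exact hfix s g
  · apply Set.Finite.subset
      (Set.Finite.pi fun _ : Fin n => torsion_finite k hk)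
    rintro t ⟨⟨s, rfl⟩, ht⟩
    have h1 : N (M s) = k • (M s) := hNfix _ ht
    have h2 : N (M s) = 0 := by
      rw [hMapp, map_sub, map_nsmul, hNfix (N s) (hfix s)]
      abel
    have h3 : k • (M s) = 0 := by rw [← h1, h2]
    intro i _
    have := congrFun h3 i
    exact this
  · rw [eq_top_iff]
    rintro t -
    have hsurj : ∀ i, ∃ x : ℝ, (x : AddCircle (1:ℝ)) = t i :=
      fun i => QuotientAddGroup.mk_surjective (t i)
    choose r hr using hsurj
    set s : T := fun i => ((r i / k : ℝ) : AddCircle (1:ℝ)) with hs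
    have hks : k • s = t := by
      funext i
      have : (k : ℝ) ≠ 0 := Nat.cast_ne_zero.mpr hk.ne'
      calc k • ((r i / k : ℝ) : AddCircle (1:ℝ))
          = ((k • (r i / k) : ℝ) : AddCircle (1:ℝ)) := (AddCircle.coe_nsmul _).symm
        _ = ((r i : ℝ) : AddCircle (1:ℝ)) := by rw [nsmul_eq_mul]; field_simp
        _ = t i := hr i
    rw [AddSubgroup.mem_sup]
    refine ⟨N s, ⟨s, rfl⟩, M s, ⟨s, rfl⟩, ?_⟩
    rw [hMapp, ← hks]
    abel
end

section
/- Let M be a 2n-dimensional quasitoric manifold whose cohomology ring is H^*(M;ℤ) = ℤ[u₁,…,u_m]/(I+J) with deg u_i = 2, where I is generated by the square-free monomials corresponding to collections of facets with empty intersection. If f is a facet coloring of the orbit polytope with n colors and V = ⊕_{i=1}^n L_{f^{-1}(i)} where c₁(L_{f^{-1}(i)}) = Σ_{F_j ∈ f^{-1}(i)} ε_j u_j with signs ε_j ∈ {±1}, then p₁(V) = p₁(M); that is, Σ_{i=1}^n (Σ_{F_j ∈ f^{-1}(i)} ε_j u_j)² = Σ_{j=1}^m u_j² in H⁴(M;ℤ).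 -/
/-- In the cohomology ring `H^*(M;ℤ)` of a quasitoric manifold, generated by the classes
`u₁, …, u_m` dual to the characteristic submanifolds (with `u_j u_{j'} = 0` whenever the
facets `F_j, F_{j'}` are disjoint), a facet coloring `f` with `n` colors yields, for any
signs `ε_j ∈ {±1}`, the identity `p₁(V) = p₁(M)`:
`Σ_{i=1}^n (Σ_{F_j ∈ f⁻¹(i)} ε_j u_j)² = Σ_{j=1}^m u_j²`. -/
theorem coloring_first_pontryagin
    (R : Type*) [CommRing R] (n m : ℕ) (u : Fin m → R)
    (meets : Fin m → Fin m → Prop)  -- `meets j j'` means `F_j ∩ F_{j'} ≠ ∅`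
    (f : Fin m → Fin n)
    -- `f` is a facet coloring: intersecting facets get different colors
    (hcolor : ∀ j j' : Fin m, j ≠ j' → meets j j' → f j ≠ f j')
    -- products of classes of disjoint facets vanish
    (hdisj : ∀ j j' : Fin m, j ≠ j' → ¬ meets j j' → u j * u j' = 0)
    (ε : Fin m → ℤ) (hε : ∀ j, ε j = 1 ∨ ε j = -1) :
    ∑ i : Fin n, (∑ j ∈ Finset.univ.filter (fun j => f j = i), ε j • u j) ^ 2
      = ∑ j : Fin m, u j ^ 2 := by
  have key : ∀ i : Fin n,
      (∑ j ∈ Finset.univ.filter (fun j => f j = i), ε j • u j) ^ 2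
        = ∑ j ∈ Finset.univ.filter (fun j => f j = i), u j ^ 2 := by
    intro i
    rw [sq, Finset.sum_mul_sum]
    rw [Finset.sum_congr rfl (fun j hj => Finset.sum_eq_single j
      (fun j' hj' hne => by
        simp only [Finset.mem_filter, Finset.mem_univ, true_and] at hj hj'
        have hnm : ¬ meets j j' := fun hm => hcolor j j' (Ne.symm hne) hm (hj.trans hj'.symm)
        have : u j * u j' = 0 := hdisj j j' (Ne.symm hne) hnm
        rw [smul_mul_smul_comm, this, smul_zero])
      (fun h => absurd hj h))]
    refine Finset.sum_congr rfl (fun j _ => ?_)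
    rw [smul_mul_smul_comm, ← sq, ← sq]
    rcases hε j with h | h <;> simp [h]
  rw [Finset.sum_congr rfl (fun i _ => key i)]
  exact Finset.sum_fiberwise _ f (fun j => u j ^ 2)
end

section
/- Let M be a 2n-dimensional quasitoric manifold over a polytope P admitting a facet coloring f with n colors, with cohomology ℤ[u₁,…,u_m]/(I+J) as above. Suppose that for every choice of signs ε_j ∈ {±1} the product Π_{i=1}^n (Σ_{F_j ∈ f^{-1}(i)} ε_j u_j) vanishes in H^{2n}(M;ℤ). Then for every n-tuple (F_{i₁},…,F_{i_n}) ∈ f^{-1}(1) × ⋯ × f^{-1}(n) the monomial u_{i₁}⋯u_{i_n} vanishes. This yields a contradiction, since for any vertex of P the facets through it have pairwise distinct colors and the corresponding monomial is nonzero; hence some choice of signs gives a nonzero product. -/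
/-- In the cohomology ring of a `2n`-dimensional quasitoric manifold over a polytope with a
facet coloring `f` with `n` colors (classes `u₁,…,u_m`, which span a torsion-free group in
even degrees): if for every choice of signs `ε_j ∈ {±1}` the product
`Π_{i=1}^n (Σ_{F_j ∈ f⁻¹(i)} ε_j u_j)` vanishes, then every monomial `u_{i₁}⋯u_{i_n}` with
one factor from each color class vanishes.  Consequently, if some vertex monomial (one
facet of each color) is nonzero, then some choice of signs gives a nonzero product. -/
theorem sign_average_product
    (R : Type*) [CommRing R] [NoZeroSMulDivisors ℤ R]
    (n m : ℕ) (u : Fin m → R) (f : Fin m → Fin n) :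
    ((∀ ε : Fin m → ℤ, (∀ j, ε j = 1 ∨ ε j = -1) →
        ∏ i : Fin n, ∑ j ∈ Finset.univ.filter (fun j => f j = i), ε j • u j = 0) →
      ∀ g : Fin n → Fin m, (∀ i, f (g i) = i) → ∏ i : Fin n, u (g i) = 0) ∧
    ((∃ g : Fin n → Fin m, (∀ i, f (g i) = i) ∧ ∏ i : Fin n, u (g i) ≠ 0) →
      ∃ ε : Fin m → ℤ, (∀ j, ε j = 1 ∨ ε j = -1) ∧
        ∏ i : Fin n, ∑ j ∈ Finset.univ.filter (fun j => f j = i), ε j • u j ≠ 0) := by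
  classical
  have main : (∀ ε : Fin m → ℤ, (∀ j, ε j = 1 ∨ ε j = -1) →
        ∏ i : Fin n, ∑ j ∈ Finset.univ.filter (fun j => f j = i), ε j • u j = 0) →
      ∀ g : Fin n → Fin m, (∀ i, f (g i) = i) → ∏ i : Fin n, u (g i) = 0 := by
    intro h g hg
    set S : (Fin m → ℤ) → Fin n → R :=
      fun ε i => ∑ j ∈ Finset.univ.filter (fun j => f j = i), ε j • u j with hS
    have key : ∀ T : Finset (Fin n), ∀ ε : Fin m → ℤ, (∀ j, ε j = 1 ∨ ε j = -1) →
        (∏ i ∈ T, u (g i)) * ∏ i ∈ Tᶜ, S ε i = 0 := by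
      intro T
      induction T using Finset.induction_on with
      | empty =>
        intro ε hε
        simp only [Finset.prod_empty, one_mul, Finset.compl_empty, hS]
        exact h ε hε
      | @insert a T haT ih =>
        intro ε hε
        set b := g a with hbdef
        have hfb : f b = a := hg a
        set ε' : Fin m → ℤ := Function.update ε b (-(ε b)) with hε'def
        have hε' : ∀ j, ε' j = 1 ∨ ε' j = -1 := by
          intro j
          by_cases hj : j = b
          · rcases hε b with h1 | h1
            · right; rw [hj, hε'def, Function.update_self, h1]
            · left; rw [hj, hε'def, Function.update_self, h1]; ring
          · rw [hε'def, Function.update_of_ne hj]; exact hε j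
        have haTc : a ∈ Tᶜ := Finset.mem_compl.mpr haT
        -- products over Tᶜ.erase a agree for ε and ε'
        have hQeq : ∏ i ∈ Tᶜ.erase a, S ε' i = ∏ i ∈ Tᶜ.erase a, S ε i := by
          refine Finset.prod_congr rfl ?_
          intro i hi
          have hia : i ≠ a := (Finset.mem_erase.mp hi).1
          refine Finset.sum_congr rfl ?_
          intro j hj
          have hjb : j ≠ b := by
            intro hjb
            apply hia
            have := (Finset.mem_filter.mp hj).2
            rw [hjb, hfb] at this
            exact this.symm
          rw [hε'def, Function.update_of_ne hjb]
        have hsplit : ∏ i ∈ Tᶜ, S ε i = S ε a * ∏ i ∈ Tᶜ.erase a, S ε i :=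
          (Finset.mul_prod_erase Tᶜ _ haTc).symm
        have hsplit' : ∏ i ∈ Tᶜ, S ε' i = S ε' a * ∏ i ∈ Tᶜ.erase a, S ε i := by
          rw [(Finset.mul_prod_erase Tᶜ _ haTc).symm, hQeq]
        have hdiff : S ε a - S ε' a = (2 * ε b) • u b := by
          rw [hS]
          simp only
          rw [← Finset.sum_sub_distrib]
          rw [Finset.sum_eq_single b]
          · rw [hε'def, Function.update_self, ← sub_smul]
            congr 1
            ring
          · intro j _ hjb
            rw [hε'def, Function.update_of_ne hjb, sub_self]
          · intro hb
            exact absurd (Finset.mem_filter.mpr ⟨Finset.mem_univ b, hfb⟩) hb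
        set P := ∏ i ∈ T, u (g i) with hP
        set Q := ∏ i ∈ Tᶜ.erase a, S ε i with hQ
        have h1 : P * (S ε a * Q) = 0 := by rw [← hsplit]; exact ih ε hε
        have h2 : P * (S ε' a * Q) = 0 := by rw [← hsplit']; exact ih ε' hε'
        have h3 : P * (((2 * ε b) • u b) * Q) = 0 := by
          rw [← hdiff, sub_mul, mul_sub, h1, h2, sub_zero]
        have h4 : (2 * ε b) • (P * (u b * Q)) = 0 := by
          rw [← h3]
          rw [smul_mul_assoc, mul_smul_comm]
        have h5 : P * (u b * Q) = 0 := by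
          rcases smul_eq_zero.mp h4 with hc | hc
          · exfalso
            rcases hε b with h1' | h1' <;> rw [h1'] at hc <;> norm_num at hc
          · exact hc
        rw [Finset.prod_insert haT, Finset.compl_insert]
        linear_combination h5
    have := key Finset.univ (fun _ => 1) (fun _ => Or.inl rfl)
    simpa [Finset.compl_univ] using this
  refine ⟨main, ?_⟩
  rintro ⟨g, hg, hne⟩
  by_contra hc
  push_neg at hc
  exact hne (main (fun ε hε => hc ε hε) g hg)
end

section
/- Let G be a compact Lie group fitting in an exact sequence 1 → T → G → W → 1 with T a torus and W finite cyclic, generated by the image of g ∈ G. Suppose T = T₁·T₂ where T₁, T₂ are W-invariant subtori with W acting trivially on T₁ and T₂^W finite. Then there exists t ∈ T₁ such that, setting g' = g t⁻¹, one has (g')^{#W} ∈ T₂; consequently the subgroup G' of G generated by g' and T₂ fits in an exact sequence 1 → T₂ → G' → W → 1. -/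
/-- Let `G` be a compact Lie group with identity component a torus `T` (an abelian normal
subgroup) and `W = G/T` finite cyclic, generated by the image of `g ∈ G`.  Suppose
`T = T₁ · T₂` where `W` acts trivially on the subtorus `T₁` (so `T₁` is divisible, i.e.
every element is a `#W`-th power inside `T₁`), `T₂` is `W`-invariant and `T₂^W` is finite.
Then there is `t ∈ T₁` such that `g' = g t⁻¹` satisfies `(g')^{#W} ∈ T₂`, and the subgroup
`G'` generated by `g'` and `T₂` fits in an exact sequence `1 → T₂ → G' → W → 1`. -/
theorem exists_good_preimage
    (G : Type*) [Group G] (T : Subgroup G) [T.Normal] [Finite (G ⧸ T)]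
    (hTcomm : ∀ a ∈ T, ∀ b ∈ T, a * b = b * a)
    (g : G)
    -- `W = G/T` is cyclic, generated by the image of `g`
    (hgen : ∀ w : G ⧸ T, ∃ k : ℤ, w = (QuotientGroup.mk g : G ⧸ T) ^ k)
    (hg : g ^ Nat.card (G ⧸ T) ∈ T)
    (T₁ T₂ : Subgroup G) (hT₁ : T₁ ≤ T) (hT₂ : T₂ ≤ T)
    -- `T` is generated by `T₁` and `T₂`
    (hprod : ∀ t ∈ T, ∃ t₁ ∈ T₁, ∃ t₂ ∈ T₂, t = t₁ * t₂)
    -- `W` acts trivially on `T₁`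
    (htriv : ∀ γ : G, ∀ t ∈ T₁, γ * t * γ⁻¹ = t)
    -- `T₁` is a torus, hence divisible
    (hdiv : ∀ t ∈ T₁, ∃ s ∈ T₁, s ^ Nat.card (G ⧸ T) = t)
    -- `T₂` is `W`-invariant and `T₂^W` is finite
    (hinv : ∀ γ : G, ∀ t ∈ T₂, γ * t * γ⁻¹ ∈ T₂)
    (hfix : {t : G | t ∈ T₂ ∧ g * t * g⁻¹ = t}.Finite) :
    ∃ t ∈ T₁,
      (g * t⁻¹) ^ Nat.card (G ⧸ T) ∈ T₂ ∧
      T₂ ≤ Subgroup.closure (insert (g * t⁻¹) (T₂ : Set G)) ∧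
      Subgroup.closure (insert (g * t⁻¹) (T₂ : Set G)) ⊓ T = T₂ ∧
      ∀ w : G ⧸ T, ∃ x ∈ Subgroup.closure (insert (g * t⁻¹) (T₂ : Set G)),
        (QuotientGroup.mk x : G ⧸ T) = w := by
  set n := Nat.card (G ⧸ T) with hn
  obtain ⟨t₁, ht₁, t₂, ht₂, heq⟩ := hprod (g ^ n) hg
  obtain ⟨s, hs, hsn⟩ := hdiv t₁ ht₁
  -- `s` is central
  have hcent : ∀ x : G, Commute x s := by
    intro x
    have h := htriv x s hs
    show x * s = s * x
    calc x * s = (x * s * x⁻¹) * x := by group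
    _ = s * x := by rw [h]
  set g' := g * s⁻¹ with hg'
  have hcomm : Commute g s⁻¹ := ((hcent g).inv_right)
  have hkey : g' ^ n = t₂ := by
    rw [hg', hcomm.mul_pow, heq, inv_pow, ← hsn, ← ((hcent t₂).pow_right n).eq]
    group
  have hg'T₂ : (g') ^ n ∈ T₂ := hkey ▸ ht₂
  -- image of g' in quotient equals image of g
  have hmk : (QuotientGroup.mk g' : G ⧸ T) = QuotientGroup.mk g := by
    have hsT : s ∈ T := hT₁ hs
    refine QuotientGroup.eq.mpr ?_
    have h2 : g'⁻¹ * g = s := by rw [hg']; group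
    rw [h2]; exact hsT
  -- order of mk g is n
  have horder : orderOf (QuotientGroup.mk g : G ⧸ T) = n := by
    rw [← Nat.card_zpowers]
    have htop : Subgroup.zpowers (QuotientGroup.mk g : G ⧸ T) = ⊤ := by
      rw [Subgroup.eq_top_iff']
      intro w
      obtain ⟨k, hk⟩ := hgen w
      exact ⟨k, hk.symm⟩
    rw [htop]
    exact Nat.card_congr Subgroup.topEquiv.toEquiv
  set C := Subgroup.closure (insert g' (T₂ : Set G)) with hC
  have hg'C : g' ∈ C := Subgroup.subset_closure (Set.mem_insert _ _)
  have hT₂C : T₂ ≤ C := fun x hx => Subgroup.subset_closure (Set.mem_insert_of_mem _ hx)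
  -- conjugation by powers of g' preserves T₂
  have hconj : ∀ k : ℤ, ∀ u ∈ T₂, g' ^ k * u * (g' ^ k)⁻¹ ∈ T₂ := fun k u hu =>
    hinv (g' ^ k) u hu
  -- structure of C
  have hstruct : ∀ x ∈ C, ∃ k : ℤ, ∃ u ∈ T₂, x = g' ^ k * u := by
    intro x hx
    refine Subgroup.closure_induction ?_ ?_ ?_ ?_ hx
    · intro y hy
      rcases hy with rfl | hy
      · exact ⟨1, 1, T₂.one_mem, by group⟩
      · exact ⟨0, y, hy, by group⟩
    · exact ⟨0, 1, T₂.one_mem, by group⟩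
    · rintro a b _ _ ⟨k, u, hu, rfl⟩ ⟨l, v, hv, rfl⟩
      refine ⟨k + l, (g' ^ (-l) * u * (g' ^ (-l))⁻¹) * v,
        T₂.mul_mem (hconj (-l) u hu) hv, ?_⟩
      rw [zpow_add, zpow_neg]
      group
    · rintro a _ ⟨k, u, hu, rfl⟩
      refine ⟨-k, g' ^ k * u⁻¹ * (g' ^ k)⁻¹, hconj k u⁻¹ (T₂.inv_mem hu), ?_⟩
      rw [zpow_neg]
      group
  refine ⟨s, hs, hg'T₂, hT₂C, ?_, ?_⟩
  · apply le_antisymm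
    · rintro x ⟨hxC, hxT⟩
      obtain ⟨k, u, hu, rfl⟩ := hstruct x hxC
      have hg'k : g' ^ k ∈ T := by
        have : (g' ^ k * u) * u⁻¹ ∈ T := T.mul_mem hxT (T.inv_mem (hT₂ hu))
        simpa using this
      have hzero : (QuotientGroup.mk g : G ⧸ T) ^ k = 1 := by
        have := (QuotientGroup.eq_one_iff (g' ^ k)).mpr hg'k
        rw [← this]
        rw [← hmk]
        simp [QuotientGroup.mk_zpow]
      have hdvd : (n : ℤ) ∣ k := by
        rw [← horder]
        exact orderOf_dvd_iff_zpow_eq_one.mpr hzero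
      obtain ⟨m, rfl⟩ := hdvd
      have : g' ^ ((n : ℤ) * m) = t₂ ^ m := by
        rw [zpow_mul, zpow_natCast, hkey]
      rw [this]
      exact T₂.mul_mem (T₂.zpow_mem ht₂ m) hu
    · exact le_inf hT₂C hT₂
  · intro w
    obtain ⟨k, hk⟩ := hgen w
    refine ⟨g' ^ k, C.zpow_mem hg'C k, ?_⟩
    rw [hk, ← hmk]
    simp [QuotientGroup.mk_zpow]
end
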